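/- In A₀ one has (ij)^m ≠ i^m j^m for every m ≥ 2 (in particular ijij ≠ i²j²), whereas in M₀ one has (ij)^m = i^m j^m for all m ≥ 1; consequently the surjective ℚ-algebra homomorphism A₀ → ℚ[M₀] sending i ↦ i and j ↦ j is not injective, i.e. the monoid algebra of the composition monoid is a proper factor of the composition algebra at q = 0. -/

import Mathlib

open FreeAlgebra

noncomputable section

/-- Defining relations for the specialisation at `q = 0` of the generic composition
algebra of the Kronecker quiver, on generators `i = ι ℚ 0` and `j = ι ℚ 1`:
(1) `i^m j^(m+1) i^(m+1) j^(m+2) = i^(2m+1) j^(2m+3)` for all `m ≥ 0`;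
(2) `i^(n+2) j^(n+1) i^(n+1) j^n = i^(2n+3) j^(2n+1)` for all `n ≥ 0`;
(3) `(i^m j^m)(i^n j^n) = (i^n j^n)(i^m j^m)` for all `m, n ≥ 1`. -/
inductive KroneckerRel0 : FreeAlgebra ℚ (Fin 2) → FreeAlgebra ℚ (Fin 2) → Prop
  | preproj (m : ℕ) :
      KroneckerRel0
        (ι ℚ 0 ^ m * ι ℚ 1 ^ (m + 1) * (ι ℚ 0 ^ (m + 1) * ι ℚ 1 ^ (m + 2)))
        (ι ℚ 0 ^ (2 * m + 1) * ι ℚ 1 ^ (2 * m + 3))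
  | preinj (n : ℕ) :
      KroneckerRel0
        (ι ℚ 0 ^ (n + 2) * ι ℚ 1 ^ (n + 1) * (ι ℚ 0 ^ (n + 1) * ι ℚ 1 ^ n))
        (ι ℚ 0 ^ (2 * n + 3) * ι ℚ 1 ^ (2 * n + 1))
  | deltaComm (m n : ℕ) (hm : 1 ≤ m) (hn : 1 ≤ n) :
      KroneckerRel0
        (ι ℚ 0 ^ m * ι ℚ 1 ^ m * (ι ℚ 0 ^ n * ι ℚ 1 ^ n))
        (ι ℚ 0 ^ n * ι ℚ 1 ^ n * (ι ℚ 0 ^ m * ι ℚ 1 ^ m))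

/-- `A₀`, the composition algebra of the Kronecker quiver specialised at `q = 0`,
presented by generators `i, j` and the relations above. -/
abbrev A0 : Type := RingQuot KroneckerRel0

/-- The generator `i` of `A₀`. -/
def iA : A0 := RingQuot.mkAlgHom ℚ KroneckerRel0 (ι ℚ 0)

/-- The generator `j` of `A₀`. -/
def jA : A0 := RingQuot.mkAlgHom ℚ KroneckerRel0 (ι ℚ 1)

/-- The commutator `ij - ji` in `A₀`. -/
def cA : A0 := iA * jA - jA * iA

/-- `P(m) = (ij - ji)^m j` in `A₀`. -/
def PA (m : ℕ) : A0 := cA ^ m * jA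

/-- `I(n) = i (ij - ji)^n` in `A₀`. -/
def IA (n : ℕ) : A0 := iA * cA ^ n

/-- `R(1) = ij - ji` and `R(s+1) = i (ij - ji)^s j` for `s ≥ 1` in `A₀`
(the value at `0` is junk). -/
def RA : ℕ → A0
  | 0 => 0
  | 1 => cA
  | (s + 2) => iA * cA ^ (s + 1) * jA

/-- `δ_m = i^m j^m` in `A₀`. -/
def deltaA (m : ℕ) : A0 := iA ^ m * jA ^ m

noncomputable section

/-- The generator `i` of the free monoid on two letters. -/
def iF : FreeMonoid (Fin 2) := FreeMonoid.of 0

/-- The generator `j` of the free monoid on two letters. -/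
def jF : FreeMonoid (Fin 2) := FreeMonoid.of 1

/-- Defining relations of Reineke's composition monoid of the Kronecker quiver:
(1) `i^m j^(m+1) i^(m+1) j^(m+2) = i^(2m+1) j^(2m+3)` for all `m ≥ 0`;
(2) `i^(n+2) j^(n+1) i^(n+1) j^n = i^(2n+3) j^(2n+1)` for all `n ≥ 0`;
(3) `(ij)^m = i^m j^m` for all `m ≥ 1`. -/
inductive KroneckerMonoidRel : FreeMonoid (Fin 2) → FreeMonoid (Fin 2) → Prop
  | preproj (m : ℕ) :
      KroneckerMonoidRel
        (iF ^ m * jF ^ (m + 1) * (iF ^ (m + 1) * jF ^ (m + 2)))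
        (iF ^ (2 * m + 1) * jF ^ (2 * m + 3))
  | preinj (n : ℕ) :
      KroneckerMonoidRel
        (iF ^ (n + 2) * jF ^ (n + 1) * (iF ^ (n + 1) * jF ^ n))
        (iF ^ (2 * n + 3) * jF ^ (2 * n + 1))
  | delta (m : ℕ) (hm : 1 ≤ m) :
      KroneckerMonoidRel ((iF * jF) ^ m) (iF ^ m * jF ^ m)

/-- `M₀`, Reineke's composition monoid of the Kronecker quiver, presented by
generators `i, j` and the relations above. -/
abbrev M0 : Type := (conGen KroneckerMonoidRel).Quotient

/-- The generator `i` of `M₀`. -/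
def iM : M0 := (iF : M0)

/-- The generator `j` of `M₀`. -/
def jM : M0 := (jF : M0)

namespace KronAux

/-- The matrix model: `i ↦ E₁₂`, `j ↦ E₂₁`. -/
def fmat : Fin 2 → Matrix (Fin 2) (Fin 2) ℚ
  | 0 => !![0,1;0,0]
  | 1 => !![0,0;1,0]

lemma fmat0 : fmat 0 = !![0,1;0,0] := rfl
lemma fmat1 : fmat 1 = !![0,0;1,0] := rfl

lemma Isq : (!![0,1;0,0] : Matrix (Fin 2) (Fin 2) ℚ) * !![0,1;0,0] = 0 := by
  ext i j; fin_cases i <;> fin_cases j <;> simp [Matrix.mul_apply, Fin.sum_univ_two]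

lemma Jsq : (!![0,0;1,0] : Matrix (Fin 2) (Fin 2) ℚ) * !![0,0;1,0] = 0 := by
  ext i j; fin_cases i <;> fin_cases j <;> simp [Matrix.mul_apply, Fin.sum_univ_two]

lemma IJ : (!![0,1;0,0] : Matrix (Fin 2) (Fin 2) ℚ) * !![0,0;1,0] = !![1,0;0,0] := by
  ext i j; fin_cases i <;> fin_cases j <;> simp [Matrix.mul_apply, Fin.sum_univ_two]

lemma E11sq : (!![1,0;0,0] : Matrix (Fin 2) (Fin 2) ℚ) * !![1,0;0,0] = !![1,0;0,0] := by
  ext i j; fin_cases i <;> fin_cases j <;> simp [Matrix.mul_apply, Fin.sum_univ_two]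

lemma nilpow {X : Matrix (Fin 2) (Fin 2) ℚ} (h : X * X = 0) {k : ℕ} (hk : 2 ≤ k) :
    X ^ k = 0 := by
  obtain ⟨l, rfl⟩ := Nat.exists_eq_add_of_le hk
  rw [add_comm, pow_add, pow_two, h, mul_zero]

lemma E11pow : ∀ {k : ℕ}, 1 ≤ k → (!![1,0;0,0] : Matrix (Fin 2) (Fin 2) ℚ) ^ k = !![1,0;0,0] := by
  intro k hk
  induction k with
  | zero => omega
  | succ n ih =>
    rcases Nat.eq_or_lt_of_le hk with h | h
    · rw [← h, pow_one]
    · rw [pow_succ, ih (by omega), E11sq]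

lemma rel_preserved : ∀ ⦃x y⦄, KroneckerRel0 x y →
    FreeAlgebra.lift ℚ fmat x = FreeAlgebra.lift ℚ fmat y := by
  intro x y h
  cases h with
  | preproj m =>
      simp only [map_mul, map_pow, FreeAlgebra.lift_ι_apply, fmat0, fmat1]
      rw [nilpow Jsq (show 2 ≤ m + 2 by omega), nilpow Jsq (show 2 ≤ 2*m + 3 by omega)]
      simp
  | preinj n =>
      simp only [map_mul, map_pow, FreeAlgebra.lift_ι_apply, fmat0, fmat1]
      rw [nilpow Isq (show 2 ≤ n + 2 by omega), nilpow Isq (show 2 ≤ 2*n + 3 by omega)]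
      simp
  | deltaComm m n hm hn =>
      simp only [map_mul, map_pow, FreeAlgebra.lift_ι_apply, fmat0, fmat1]
      rcases Nat.lt_or_ge m 2 with h1 | h1
      · rcases Nat.lt_or_ge n 2 with h2 | h2
        · obtain rfl : m = 1 := by omega
          obtain rfl : n = 1 := by omega
          rfl
        · rw [nilpow Isq h2]; simp
      · rw [nilpow Isq h1]; simp

/-- The matrix representation of `A₀`. -/
def psi : A0 →ₐ[ℚ] Matrix (Fin 2) (Fin 2) ℚ :=
  RingQuot.liftAlgHom ℚ ⟨FreeAlgebra.lift ℚ fmat, rel_preserved⟩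

lemma psi_i : psi iA = !![0,1;0,0] := by
  rw [iA, psi, RingQuot.liftAlgHom_mkAlgHom_apply, FreeAlgebra.lift_ι_apply, fmat0]

lemma psi_j : psi jA = !![0,0;1,0] := by
  rw [jA, psi, RingQuot.liftAlgHom_mkAlgHom_apply, FreeAlgebra.lift_ι_apply, fmat1]

end KronAux

/-- In `A₀` one has `(ij)^m ≠ i^m j^m` for every `m ≥ 2`, whereas in `M₀` one has
`(ij)^m = i^m j^m` for all `m ≥ 1`; consequently any `ℚ`-algebra homomorphism
`A₀ → ℚ[M₀]` sending `i ↦ i` and `j ↦ j` is surjective but not injective: the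
monoid algebra of the composition monoid is a proper factor of the composition
algebra at `q = 0`. -/
theorem composition_monoid_proper_factor :
    (∀ m : ℕ, 2 ≤ m → (iA * jA) ^ m ≠ iA ^ m * jA ^ m) ∧
    (∀ m : ℕ, 1 ≤ m → (iM * jM) ^ m = iM ^ m * jM ^ m) ∧
    ∀ φ : A0 →ₐ[ℚ] MonoidAlgebra ℚ M0,
      φ iA = MonoidAlgebra.of ℚ M0 iM → φ jA = MonoidAlgebra.of ℚ M0 jM →
      Function.Surjective φ ∧ ¬ Function.Injective φ := by
  have part1 : ∀ m : ℕ, 2 ≤ m → (iA * jA) ^ m ≠ iA ^ m * jA ^ m := by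
    intro m hm heq
    have h := congrArg KronAux.psi heq
    rw [map_pow, map_mul, map_mul, map_pow, map_pow, KronAux.psi_i, KronAux.psi_j,
      KronAux.IJ, KronAux.E11pow (by omega : 1 ≤ m),
      KronAux.nilpow KronAux.Isq hm, zero_mul] at h
    have h00 := congrFun (congrFun h 0) 0
    simp at h00
  have part2 : ∀ m : ℕ, 1 ≤ m → (iM * jM) ^ m = iM ^ m * jM ^ m := by
    intro m hm
    have key : ((((iF * jF) ^ m : FreeMonoid (Fin 2))) : M0)
        = ((iF ^ m * jF ^ m : FreeMonoid (Fin 2)) : M0) :=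
      (Con.eq _).mpr (ConGen.Rel.of _ _ (KroneckerMonoidRel.delta m hm))
    exact key
  refine ⟨part1, part2, ?_⟩
  intro φ hi hj
  constructor
  · -- Surjectivity
    have hrange : ∀ x : M0, MonoidAlgebra.of ℚ M0 x ∈ φ.range := by
      intro x
      induction x using Con.induction_on with
      | _ w =>
        induction w using FreeMonoid.recOn with
        | one =>
          refine ⟨1, ?_⟩
          show φ 1 = MonoidAlgebra.of ℚ M0 ((1 : FreeMonoid (Fin 2)) : M0)
          rw [map_one, show ((1 : FreeMonoid (Fin 2)) : M0) = 1 from rfl, map_one]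
        | of_mul a w ihw =>
          have hco : ((FreeMonoid.of a * w : FreeMonoid (Fin 2)) : M0)
              = ((FreeMonoid.of a : FreeMonoid (Fin 2)) : M0) * (w : M0) := rfl
          rw [hco, map_mul]
          refine mul_mem ?_ ihw
          fin_cases a
          · exact ⟨iA, hi⟩
          · exact ⟨jA, hj⟩
    intro z
    induction z using MonoidAlgebra.induction_on with
    | of g => exact hrange g
    | add f g hf hg =>
      obtain ⟨x, hx⟩ := hf; obtain ⟨y, hy⟩ := hg
      exact ⟨x + y, by rw [map_add, hx, hy]⟩
    | smul r f hf =>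
      obtain ⟨x, hx⟩ := hf
      exact ⟨r • x, by rw [map_smul, hx]⟩
  · -- Non-injectivity
    intro hinj
    apply part1 2 le_rfl
    apply hinj
    rw [map_pow, map_mul, map_mul, map_pow, map_pow, hi, hj,
      ← map_mul (MonoidAlgebra.of ℚ M0), ← map_pow, ← map_pow, ← map_pow,
      ← map_mul (MonoidAlgebra.of ℚ M0)]
    exact congrArg _ (part2 2 one_le_two)
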